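/- Let λ(t) be a differentiable eigenvalue branch of a differentiable family of unitary matrices L(t) with differentiable unit eigenvector φ(t), i.e. L(t)φ(t) = λ(t)φ(t) and ‖φ(t)‖ = 1 for all t. If dL/dt = [L, P], then dλ/dt = 0. -/

import Mathlib

open scoped ComplexConjugate
open Matrix

/-- Let `L t` be a differentiable family of unitary `N × N`
matrices satisfying the Lax equation `dL/dt = [L, P]`, and let `lam t` be a
differentiable eigenvalue branch with differentiable unit eigenvector `φ t`,
i.e. `L t ⬝ᵥ φ t = lam t • φ t` and `‖φ t‖ = 1` (as a vector in `ℂ^N`).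
Then `dλ/dt = 0`. -/
theorem lax_pair_eigenvalue_branch_constant
    (N : ℕ) (L P : ℝ → Matrix (Fin N) (Fin N) ℂ)
    (lam : ℝ → ℂ) (lam' : ℝ → ℂ)
    (φ : ℝ → (Fin N → ℂ)) (φ' : ℝ → (Fin N → ℂ))
    (hunit : ∀ t, L t ∈ Matrix.unitaryGroup (Fin N) ℂ)
    (hlax : ∀ t i j, HasDerivAt (fun s => L s i j)
      ((L t * P t - P t * L t) i j) t)
    (heig : ∀ t, (L t).mulVec (φ t) = lam t • φ t)
    (hnorm : ∀ t, ∑ i, Complex.normSq (φ t i) = 1)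
    (hφ : ∀ t i, HasDerivAt (fun s => φ s i) (φ' t i) t)
    (hlam : ∀ t, HasDerivAt lam (lam' t) t) :
    ∀ t, lam' t = 0 := by
  intro t
  set A := L t with hAdef
  set B := P t with hBdef
  set v := φ t with hvdef
  set w := φ' t with hwdef
  set l := lam t with hldef
  have hU : Aᴴ * A = 1 := Matrix.mem_unitaryGroup_iff'.mp (hunit t)
  have hv : A.mulVec v = l • v := heig t
  -- ⟨v, v⟩ = 1
  have hvv : star v ⬝ᵥ v = 1 := by
    have : star v ⬝ᵥ v = ((∑ i, Complex.normSq (v i) : ℝ) : ℂ) := by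
      simp [dotProduct, Complex.normSq_eq_conj_mul_self]
    rw [this, hnorm t]
    norm_num
  have hAv : Aᴴ *ᵥ (A *ᵥ v) = v := by
    rw [Matrix.mulVec_mulVec, hU, Matrix.one_mulVec]
  -- |l|^2 = 1
  have hll : conj l * l = 1 := by
    have h1 : star (A *ᵥ v) ⬝ᵥ (A *ᵥ v) = star v ⬝ᵥ v := by
      rw [Matrix.star_mulVec, ← Matrix.dotProduct_mulVec, hAv]
    rw [hv] at h1
    have h2 : star (l • v) ⬝ᵥ (l • v) = conj l * l * (star v ⬝ᵥ v) := by
      rw [star_smul, smul_dotProduct, dotProduct_smul]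
      simp [Complex.star_def, smul_eq_mul]; ring
    rw [h2, hvv] at h1
    simpa using h1
  have hAHv : Aᴴ *ᵥ v = conj l • v := by
    have h1 : l • (Aᴴ *ᵥ v) = v := by
      rw [← Matrix.mulVec_smul, ← hv, hAv]
    calc Aᴴ *ᵥ v = (conj l * l) • (Aᴴ *ᵥ v) := by rw [hll, one_smul]
    _ = conj l • (l • (Aᴴ *ᵥ v)) := by rw [smul_smul]
    _ = conj l • v := by rw [h1]
  have hvA : star v ᵥ* A = l • star v := by
    have h1 : star (Aᴴ *ᵥ v) = star v ᵥ* Aᴴᴴ := by rw [Matrix.star_mulVec]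
    rw [Matrix.conjTranspose_conjTranspose] at h1
    rw [← h1, hAHv, star_smul]
    simp [Complex.star_def]
  -- derivative of the eigenvalue equation, componentwise
  have key : ∀ i, ((A * B - B * A) *ᵥ v + A *ᵥ w) i = lam' t * v i + l * w i := by
    intro i
    have hd1 : HasDerivAt (fun s => (L s *ᵥ φ s) i)
        (((A * B - B * A) *ᵥ v + A *ᵥ w) i) t := by
      have h := HasDerivAt.fun_sum (fun j (_ : j ∈ Finset.univ) =>
        ((hlax t i j).mul (hφ t j)))
      have hfun : (fun s => (L s *ᵥ φ s) i) = fun s => ∑ j, L s i j * φ s j := by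
        funext s; rfl
      rw [hfun]
      convert h using 1
      · rfl
      · rfl
      · simp [Matrix.mulVec, dotProduct, Finset.sum_add_distrib]; rfl
    have hd2 : HasDerivAt (fun s => (L s *ᵥ φ s) i) (lam' t * v i + l * w i) t := by
      have hfun : (fun s => (L s *ᵥ φ s) i) = fun s => lam s * φ s i := by
        funext s; rw [heig s]; simp
      rw [hfun]
      exact (hlam t).mul (hφ t i)
    exact hd1.unique hd2
  -- pair with star v
  have keysum : star v ⬝ᵥ ((A * B - B * A) *ᵥ v + A *ᵥ w)
      = lam' t * (star v ⬝ᵥ v) + l * (star v ⬝ᵥ w) := by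
    have : star v ⬝ᵥ ((A * B - B * A) *ᵥ v + A *ᵥ w)
        = ∑ i, star v i * (lam' t * v i + l * w i) := by
      apply Finset.sum_congr rfl
      intro i _
      rw [key i]
    rw [this]
    simp only [dotProduct, Finset.mul_sum, ← Finset.sum_add_distrib]
    apply Finset.sum_congr rfl
    intro i _
    ring
  -- simplify the left side
  have lhs_eq : star v ⬝ᵥ ((A * B - B * A) *ᵥ v + A *ᵥ w)
      = l * (star v ⬝ᵥ w) := by
    rw [dotProduct_add, Matrix.sub_mulVec, dotProduct_sub]
    have t1 : star v ⬝ᵥ ((A * B) *ᵥ v) = l * (star v ⬝ᵥ (B *ᵥ v)) := by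
      rw [← Matrix.mulVec_mulVec, Matrix.dotProduct_mulVec, hvA,
        smul_dotProduct, smul_eq_mul]
    have t2 : star v ⬝ᵥ ((B * A) *ᵥ v) = l * (star v ⬝ᵥ (B *ᵥ v)) := by
      rw [← Matrix.mulVec_mulVec, hv, Matrix.mulVec_smul,
        dotProduct_smul, smul_eq_mul]
    have t3 : star v ⬝ᵥ (A *ᵥ w) = l * (star v ⬝ᵥ w) := by
      rw [Matrix.dotProduct_mulVec, hvA, smul_dotProduct, smul_eq_mul]
    rw [t1, t2, t3]
    ring
  rw [lhs_eq, hvv, mul_one] at keysum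
  linear_combination keysum.symm
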